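/- Let X be a nonnegative real random variable with 𝔼[X] = 1, 𝔼[X²] < ∞ and Var(X) > 0. For s > 0 define ψ(s) = 𝔼[(1 − X/s)·1_{{X ≤ s}}], and for s large enough that ψ(s) > 0 define Y_s = (1/ψ(s))·(1 − X/s)·1_{{X ≤ s}}. Then lim_{s→∞} s·Cov(X, Y_s) = −Var(X) and lim_{s→∞} s²·Var(Y_s) = Var(X). -/

import Mathlib

open MeasureTheory ProbabilityTheory Filter


section Aux

variable {Ω : Type*} [MeasureSpace Ω] [IsProbabilityMeasure (ℙ : Measure Ω)]
variable {X : Ω → ℝ}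

lemma aux_int_le (hX : Measurable X) (g : Ω → ℝ) (hg : Measurable g)
    (hgb : ∀ ω, |g ω| ≤ |X ω| ^ 2 + |X ω| + 1)
    (hX2 : Integrable (fun ω => X ω ^ 2)) (hX1 : Integrable X) (s : ℝ) :
    Integrable (fun ω => g ω * (if X ω ≤ s then (1:ℝ) else 0)) := by
  have hb : Integrable (fun ω => |X ω| ^ 2 + |X ω| + 1) := by
    apply Integrable.add (Integrable.add _ hX1.abs) (integrable_const 1)
    simpa [sq_abs] using hX2
  refine hb.mono' ?_ ?_
  · exact ((hg.mul (Measurable.ite (measurableSet_le hX measurable_const)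
      measurable_const measurable_const))).aestronglyMeasurable
  · filter_upwards with ω
    rw [Real.norm_eq_abs, abs_mul]
    have h1 : |if X ω ≤ s then (1:ℝ) else 0| ≤ 1 := by split <;> simp
    calc |g ω| * |if X ω ≤ s then (1:ℝ) else 0| ≤ (|X ω| ^ 2 + |X ω| + 1) * 1 := by
          apply mul_le_mul (hgb ω) h1 (abs_nonneg _)
          positivity
      _ = |X ω| ^ 2 + |X ω| + 1 := mul_one _

lemma aux_int_gt (hX : Measurable X) (g : Ω → ℝ) (hg : Measurable g)
    (hgb : ∀ ω, |g ω| ≤ |X ω| ^ 2 + |X ω| + 1)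
    (hX2 : Integrable (fun ω => X ω ^ 2)) (hX1 : Integrable X) (s : ℝ) :
    Integrable (fun ω => g ω * (if s < X ω then (1:ℝ) else 0)) := by
  have hb : Integrable (fun ω => |X ω| ^ 2 + |X ω| + 1) := by
    apply Integrable.add (Integrable.add _ hX1.abs) (integrable_const 1)
    simpa [sq_abs] using hX2
  refine hb.mono' ?_ ?_
  · exact ((hg.mul (Measurable.ite (measurableSet_lt measurable_const hX)
      measurable_const measurable_const))).aestronglyMeasurable
  · filter_upwards with ω
    rw [Real.norm_eq_abs, abs_mul]
    have h1 : |if s < X ω then (1:ℝ) else 0| ≤ 1 := by split <;> simp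
    calc |g ω| * |if s < X ω then (1:ℝ) else 0| ≤ (|X ω| ^ 2 + |X ω| + 1) * 1 := by
          apply mul_le_mul (hgb ω) h1 (abs_nonneg _)
          positivity
      _ = |X ω| ^ 2 + |X ω| + 1 := mul_one _

end Aux

section Aux2

variable {Ω : Type*} [MeasureSpace Ω] [IsProbabilityMeasure (ℙ : Measure Ω)]
variable {X : Ω → ℝ}

lemma aux_tendsto_le (hX : Measurable X) (g : Ω → ℝ) (hg : Measurable g)
    (hgb : ∀ ω, |g ω| ≤ |X ω| ^ 2 + |X ω| + 1)
    (hX2 : Integrable (fun ω => X ω ^ 2)) (hX1 : Integrable X) :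
    Tendsto (fun s => ∫ ω, g ω * (if X ω ≤ s then (1:ℝ) else 0)) atTop
      (nhds (∫ ω, g ω)) := by
  have hb : Integrable (fun ω => |X ω| ^ 2 + |X ω| + 1) := by
    apply Integrable.add (Integrable.add _ hX1.abs) (integrable_const 1)
    simpa [sq_abs] using hX2
  apply tendsto_integral_filter_of_dominated_convergence
    (fun ω => |X ω| ^ 2 + |X ω| + 1) _ _ hb
  · filter_upwards with ω
    apply Tendsto.congr' _ tendsto_const_nhds
    filter_upwards [eventually_ge_atTop (X ω)] with s hs
    rw [if_pos hs, mul_one]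
  · filter_upwards with s
    exact ((hg.mul (Measurable.ite (measurableSet_le hX measurable_const)
      measurable_const measurable_const))).aestronglyMeasurable
  · filter_upwards with s
    filter_upwards with ω
    rw [Real.norm_eq_abs, abs_mul]
    have h1 : |if X ω ≤ s then (1:ℝ) else 0| ≤ 1 := by split <;> simp
    calc |g ω| * |if X ω ≤ s then (1:ℝ) else 0| ≤ (|X ω| ^ 2 + |X ω| + 1) * 1 := by
          apply mul_le_mul (hgb ω) h1 (abs_nonneg _); positivity
      _ = |X ω| ^ 2 + |X ω| + 1 := mul_one _

lemma aux_tendsto_gt (hX : Measurable X)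
    (hX2 : Integrable (fun ω => X ω ^ 2)) (hX1 : Integrable X)
    (f : ℝ → Ω → ℝ) (hf : ∀ s, Measurable (f s))
    (hfb : ∀ s ω, 0 ≤ s → s < X ω → |f s ω| ≤ |X ω| ^ 2 + |X ω| + 1) :
    Tendsto (fun s => ∫ ω, f s ω * (if s < X ω then (1:ℝ) else 0)) atTop
      (nhds 0) := by
  have hb : Integrable (fun ω => |X ω| ^ 2 + |X ω| + 1) := by
    apply Integrable.add (Integrable.add _ hX1.abs) (integrable_const 1)
    simpa [sq_abs] using hX2
  have key := tendsto_integral_filter_of_dominated_convergence (μ := (ℙ : Measure Ω)) (l := (atTop : Filter ℝ))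
    (F := fun s ω => f s ω * (if s < X ω then (1:ℝ) else 0)) (f := fun _ => (0:ℝ))
    (fun ω => |X ω| ^ 2 + |X ω| + 1) ?_ ?_ hb ?_
  · simpa using key
  · filter_upwards with s
    exact (((hf s).mul (Measurable.ite (measurableSet_lt measurable_const hX)
      measurable_const measurable_const))).aestronglyMeasurable
  · filter_upwards [eventually_ge_atTop (0:ℝ)] with s hs
    filter_upwards with ω
    rw [Real.norm_eq_abs, abs_mul]
    by_cases h : s < X ω
    · rw [if_pos h, abs_one, mul_one]
      exact hfb s ω hs h
    · rw [if_neg h, abs_zero, mul_zero]; positivity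
  · filter_upwards with ω
    apply Tendsto.congr' _ tendsto_const_nhds
    filter_upwards [eventually_ge_atTop (X ω)] with s hs
    rw [if_neg (not_lt.2 hs), mul_zero]

lemma aux_tendsto_psi (hX : Measurable X) (hXpos : ∀ ω, 0 ≤ X ω) :
    Tendsto (fun s => ∫ ω, if X ω ≤ s then 1 - X ω / s else 0) atTop
      (nhds 1) := by
  have key := tendsto_integral_filter_of_dominated_convergence (μ := (ℙ : Measure Ω)) (l := (atTop : Filter ℝ))
    (F := fun s ω => if X ω ≤ s then 1 - X ω / s else 0) (f := fun _ => (1:ℝ))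
    (fun _ => (1:ℝ)) ?_ ?_ (integrable_const 1) ?_
  · simpa using key
  · filter_upwards with s
    exact (Measurable.ite (measurableSet_le hX measurable_const)
      (measurable_const.sub (hX.div_const s)) measurable_const).aestronglyMeasurable
  · filter_upwards [eventually_gt_atTop (0:ℝ)] with s hs
    filter_upwards with ω
    rw [Real.norm_eq_abs]
    by_cases h : X ω ≤ s
    · rw [if_pos h, abs_of_nonneg]
      · have : 0 ≤ X ω / s := div_nonneg (hXpos ω) hs.le
        linarith
      · have : X ω / s ≤ 1 := (div_le_one hs).2 h
        linarith
    · rw [if_neg h]; simp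
  · filter_upwards with ω
    have h1 : Tendsto (fun s => 1 - X ω / s) atTop (nhds 1) := by
      have := Tendsto.div_atTop (tendsto_const_nhds (x := X ω)) tendsto_id
      simpa using (tendsto_const_nhds (x := (1:ℝ))).sub this
    apply h1.congr'
    filter_upwards [eventually_ge_atTop (X ω)] with s hs
    rw [if_pos hs]

end Aux2

section Aux3

set_option linter.unusedSectionVars false

variable {Ω : Type*} [MeasureSpace Ω] [IsProbabilityMeasure (ℙ : Measure Ω)]
variable {X : Ω → ℝ}

lemma bnd1 (X : Ω → ℝ) : ∀ ω, |(1:ℝ)| ≤ |X ω| ^ 2 + |X ω| + 1 := by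
  intro ω; rw [abs_one]; nlinarith [abs_nonneg (X ω), sq_nonneg (|X ω|)]

lemma bndX (X : Ω → ℝ) : ∀ ω, |X ω| ≤ |X ω| ^ 2 + |X ω| + 1 := by
  intro ω; nlinarith [abs_nonneg (X ω), sq_nonneg (|X ω|)]

lemma bndX2 (X : Ω → ℝ) : ∀ ω, |X ω ^ 2| ≤ |X ω| ^ 2 + |X ω| + 1 := by
  intro ω; rw [abs_pow]; nlinarith [abs_nonneg (X ω), sq_nonneg (|X ω|)]

lemma int_ind (hX : Measurable X) (hX2 : Integrable (fun ω => X ω ^ 2))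
    (hXint : Integrable X) (s : ℝ) :
    Integrable (fun ω => if X ω ≤ s then (1:ℝ) else 0) := by
  simpa using aux_int_le hX (fun _ => (1:ℝ)) measurable_const (bnd1 X) hX2 hXint s

lemma int_Xind (hX : Measurable X) (hX2 : Integrable (fun ω => X ω ^ 2))
    (hXint : Integrable X) (s : ℝ) :
    Integrable (fun ω => X ω * (if X ω ≤ s then (1:ℝ) else 0)) :=
  aux_int_le hX X hX (bndX X) hX2 hXint s

lemma int_X2ind (hX : Measurable X) (hX2 : Integrable (fun ω => X ω ^ 2))
    (hXint : Integrable X) (s : ℝ) :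
    Integrable (fun ω => X ω ^ 2 * (if X ω ≤ s then (1:ℝ) else 0)) :=
  aux_int_le hX (fun ω => X ω ^ 2) (hX.pow_const 2) (bndX2 X) hX2 hXint s

lemma int_indGt (hX : Measurable X) (hX2 : Integrable (fun ω => X ω ^ 2))
    (hXint : Integrable X) (s : ℝ) :
    Integrable (fun ω => if s < X ω then (1:ℝ) else 0) := by
  simpa using aux_int_gt hX (fun _ => (1:ℝ)) measurable_const (bnd1 X) hX2 hXint s

lemma int_XindGt (hX : Measurable X) (hX2 : Integrable (fun ω => X ω ^ 2))
    (hXint : Integrable X) (s : ℝ) :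
    Integrable (fun ω => (X ω - 1) * (if s < X ω then (1:ℝ) else 0)) := by
  refine aux_int_gt hX (fun ω => X ω - 1) (hX.sub measurable_const) ?_ hX2 hXint s
  intro ω
  have := abs_add_le (X ω) (-1)
  have h2 : |X ω - 1| ≤ |X ω| + 1 := by
    calc |X ω - 1| = |X ω + (-1)| := by ring_nf
      _ ≤ |X ω| + |(-1:ℝ)| := abs_add_le _ _
      _ = |X ω| + 1 := by simp
  nlinarith [abs_nonneg (X ω), sq_nonneg (|X ω|)]

end Aux3

section Aux4
set_option linter.unusedSectionVars false

variable {Ω : Type*} [MeasureSpace Ω] [IsProbabilityMeasure (ℙ : Measure Ω)]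
variable {X : Ω → ℝ}

lemma idPsi (hX : Measurable X) (hX2 : Integrable (fun ω => X ω ^ 2))
    (hXint : Integrable X) (s : ℝ) :
    (∫ ω, if X ω ≤ s then 1 - X ω / s else 0) =
      (∫ ω, if X ω ≤ s then (1:ℝ) else 0)
        - s⁻¹ * ∫ ω, X ω * (if X ω ≤ s then (1:ℝ) else 0) := by
  have h : (fun ω => if X ω ≤ s then 1 - X ω / s else 0) =
      fun ω => (if X ω ≤ s then (1:ℝ) else 0)
        - s⁻¹ * (X ω * (if X ω ≤ s then (1:ℝ) else 0)) := by
    funext ω; by_cases h : X ω ≤ s <;> simp [h, div_eq_inv_mul] <;> ring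
  rw [h, integral_sub (int_ind hX hX2 hXint s)
    ((int_Xind hX hX2 hXint s).const_mul _), integral_const_mul _ _]

lemma idXv (hX : Measurable X) (hX2 : Integrable (fun ω => X ω ^ 2))
    (hXint : Integrable X) (s : ℝ) :
    (∫ ω, X ω * (if X ω ≤ s then 1 - X ω / s else 0)) =
      (∫ ω, X ω * (if X ω ≤ s then (1:ℝ) else 0))
        - s⁻¹ * ∫ ω, X ω ^ 2 * (if X ω ≤ s then (1:ℝ) else 0) := by
  have h : (fun ω => X ω * (if X ω ≤ s then 1 - X ω / s else 0)) =
      fun ω => (X ω * (if X ω ≤ s then (1:ℝ) else 0))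
        - s⁻¹ * (X ω ^ 2 * (if X ω ≤ s then (1:ℝ) else 0)) := by
    funext ω; by_cases h : X ω ≤ s <;> simp [h, div_eq_inv_mul] <;> ring
  rw [h, integral_sub (int_Xind hX hX2 hXint s)
    ((int_X2ind hX hX2 hXint s).const_mul _), integral_const_mul _ _]

lemma idQv (hX : Measurable X) (hX2 : Integrable (fun ω => X ω ^ 2))
    (hXint : Integrable X) (s : ℝ) :
    (∫ ω, (if X ω ≤ s then 1 - X ω / s else 0) ^ 2) =
      (∫ ω, if X ω ≤ s then (1:ℝ) else 0)
        + (-(2 * s⁻¹)) * (∫ ω, X ω * (if X ω ≤ s then (1:ℝ) else 0))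
        + (s⁻¹) ^ 2 * ∫ ω, X ω ^ 2 * (if X ω ≤ s then (1:ℝ) else 0) := by
  have h : (fun ω => (if X ω ≤ s then 1 - X ω / s else 0) ^ 2) =
      fun ω => (if X ω ≤ s then (1:ℝ) else 0)
        + (-(2 * s⁻¹)) * (X ω * (if X ω ≤ s then (1:ℝ) else 0))
        + (s⁻¹) ^ 2 * (X ω ^ 2 * (if X ω ≤ s then (1:ℝ) else 0)) := by
    funext ω; by_cases h : X ω ≤ s <;> simp [h, div_eq_inv_mul] <;> ring
  have i1 := int_ind hX hX2 hXint s
  have i2 := (int_Xind hX hX2 hXint s).const_mul (-(2 * s⁻¹))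
  have i3 := (int_X2ind hX hX2 hXint s).const_mul ((s⁻¹) ^ 2)
  have i12 : Integrable (fun ω => (if X ω ≤ s then (1:ℝ) else 0)
      + (-(2 * s⁻¹)) * (X ω * (if X ω ≤ s then (1:ℝ) else 0))) := i1.add i2
  rw [h, integral_add i12 i3, integral_add i1 i2,
    integral_const_mul _ _, integral_const_mul _ _]

lemma idGt (hX : Measurable X) (hX2 : Integrable (fun ω => X ω ^ 2))
    (hXint : Integrable X) (s : ℝ) :
    (∫ ω, if s < X ω then (1:ℝ) else 0) =
      1 - ∫ ω, if X ω ≤ s then (1:ℝ) else 0 := by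
  have h : (fun ω => if s < X ω then (1:ℝ) else 0) =
      fun ω => 1 - (if X ω ≤ s then (1:ℝ) else 0) := by
    funext ω; by_cases h : X ω ≤ s
    · simp [h, not_lt.2 h]
    · simp [h, not_le.1 h]
  rw [h, integral_sub (integrable_const 1) (int_ind hX hX2 hXint s)]
  simp

lemma idT (hX : Measurable X) (hX2 : Integrable (fun ω => X ω ^ 2))
    (hXint : Integrable X) (s : ℝ) :
    (∫ ω, s * (if s < X ω then (1:ℝ) else 0)) =
      s * (1 - ∫ ω, if X ω ≤ s then (1:ℝ) else 0) := by
  rw [integral_const_mul _ _, idGt hX hX2 hXint s]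

lemma idU (hX : Measurable X) (hX2 : Integrable (fun ω => X ω ^ 2))
    (hXint : Integrable X) (s : ℝ) :
    (∫ ω, s ^ 2 * (if s < X ω then (1:ℝ) else 0)) =
      s ^ 2 * (1 - ∫ ω, if X ω ≤ s then (1:ℝ) else 0) := by
  rw [integral_const_mul _ _, idGt hX hX2 hXint s]

lemma idG (hX : Measurable X) (hX2 : Integrable (fun ω => X ω ^ 2))
    (hXint : Integrable X) (hmean : ∫ ω, X ω = 1) (s : ℝ) :
    s * ((∫ ω, X ω * (if X ω ≤ s then (1:ℝ) else 0))
        - ∫ ω, if X ω ≤ s then (1:ℝ) else 0) =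
      -(∫ ω, s * (X ω - 1) * (if s < X ω then (1:ℝ) else 0)) := by
  have key : (∫ ω, (X ω - 1) * (if X ω ≤ s then (1:ℝ) else 0))
      + (∫ ω, (X ω - 1) * (if s < X ω then (1:ℝ) else 0)) = 0 := by
    have hint1 : Integrable (fun ω => (X ω - 1) * (if X ω ≤ s then (1:ℝ) else 0)) := by
      have h : (fun ω => (X ω - 1) * (if X ω ≤ s then (1:ℝ) else 0)) =
          fun ω => (X ω * (if X ω ≤ s then (1:ℝ) else 0))
            - (if X ω ≤ s then (1:ℝ) else 0) := by
        funext ω; ring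
      rw [h]; exact (int_Xind hX hX2 hXint s).sub (int_ind hX hX2 hXint s)
    have hint2 := int_XindGt hX hX2 hXint s
    rw [← integral_add hint1 hint2]
    have h : (fun ω => (X ω - 1) * (if X ω ≤ s then (1:ℝ) else 0)
        + (X ω - 1) * (if s < X ω then (1:ℝ) else 0)) = fun ω => X ω - 1 := by
      funext ω; by_cases h : X ω ≤ s
      · simp [h, not_lt.2 h]
      · simp [h, not_le.1 h]
    rw [h, integral_sub hXint (integrable_const 1), hmean]
    simp
  have h1 : (∫ ω, (X ω - 1) * (if X ω ≤ s then (1:ℝ) else 0)) =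
      (∫ ω, X ω * (if X ω ≤ s then (1:ℝ) else 0))
        - ∫ ω, if X ω ≤ s then (1:ℝ) else 0 := by
    have h : (fun ω => (X ω - 1) * (if X ω ≤ s then (1:ℝ) else 0)) =
        fun ω => (X ω * (if X ω ≤ s then (1:ℝ) else 0))
          - (if X ω ≤ s then (1:ℝ) else 0) := by
      funext ω; ring
    rw [h, integral_sub (int_Xind hX hX2 hXint s) (int_ind hX hX2 hXint s)]
  have h2 : (∫ ω, s * (X ω - 1) * (if s < X ω then (1:ℝ) else 0)) =
      s * ∫ ω, (X ω - 1) * (if s < X ω then (1:ℝ) else 0) := by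
    rw [← integral_const_mul _ _]
    congr 1; funext ω; ring
  rw [← h1, h2]
  have : (∫ ω, (X ω - 1) * (if s < X ω then (1:ℝ) else 0)) =
      -(∫ ω, (X ω - 1) * (if X ω ≤ s then (1:ℝ) else 0)) := by linarith
  rw [this]; ring

end Aux4

lemma alg1 (s p a b g ψs : ℝ) (hs : s ≠ 0) (hψ : ψs ≠ 0)
    (h1 : s * ψs = s * p - a) (h4 : s * (a - p) = -g) :
    s * ((1 / ψs) * (a - s⁻¹ * b) - 1 * ((1 / ψs) * ψs)) = ψs⁻¹ * (-g + a - b) := by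
  have hs' : s * s⁻¹ = 1 := mul_inv_cancel₀ hs
  linear_combination (-(b * ψs⁻¹)) * hs' + ψs⁻¹ * h4 - ψs⁻¹ * h1

lemma alg2 (s p a b ψs : ℝ) (hs : s ≠ 0) (hψ : ψs ≠ 0)
    (h1 : s * ψs = s * p - a) :
    s ^ 2 * ((1 / ψs) ^ 2 * (p + (-(2 * s⁻¹)) * a + (s⁻¹) ^ 2 * b)
        - ((1 / ψs) * ψs) ^ 2) =
      (ψs⁻¹) ^ 2 * (p * (s ^ 2 * (1 - p)) - 2 * (a * (s * (1 - p))) + b - a ^ 2) := by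
  have hs' : s * s⁻¹ = 1 := mul_inv_cancel₀ hs
  linear_combination (ψs⁻¹) ^ 2 * (-2 * s * a + b * (s * s⁻¹ + 1)) * hs' - (ψs⁻¹) ^ 2 * (s * p - a + s * ψs) * h1


/-- Construction of strongly negatively correlated nonnegative unit-mean random
variables: with `X ≥ 0`, `E[X] = 1`, `E[X²] < ∞`, `Var(X) > 0`,
`ψ(s) = E[(1 - X/s)1_{X≤s}]` and `Y_s = (1/ψ(s))(1 - X/s)1_{X≤s}`, one has
`lim_{s→∞} s·Cov(X,Y_s) = -Var(X)` and `lim_{s→∞} s²·Var(Y_s) = Var(X)`. -/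
theorem stmt16 {Ω : Type*} [MeasureSpace Ω] [IsProbabilityMeasure (ℙ : Measure Ω)]
    (X : Ω → ℝ) (hX : Measurable X) (hXpos : ∀ ω, 0 ≤ X ω)
    (hX2 : Integrable (fun ω => X ω ^ 2))
    (hmean : ∫ ω, X ω = 1)
    (hvar : 0 < (∫ ω, X ω ^ 2) - (∫ ω, X ω) ^ 2)
    (ψ : ℝ → ℝ)
    (hψ : ψ = fun s => ∫ ω, if X ω ≤ s then 1 - X ω / s else 0)
    (Y : ℝ → Ω → ℝ)
    (hY : Y = fun s ω => (1 / ψ s) * (if X ω ≤ s then 1 - X ω / s else 0)) :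
    Tendsto (fun s => s * ((∫ ω, X ω * Y s ω) - (∫ ω, X ω) * ∫ ω, Y s ω))
      atTop (nhds (-((∫ ω, X ω ^ 2) - (∫ ω, X ω) ^ 2))) ∧
    Tendsto (fun s => s ^ 2 * ((∫ ω, (Y s ω) ^ 2) - (∫ ω, Y s ω) ^ 2))
      atTop (nhds ((∫ ω, X ω ^ 2) - (∫ ω, X ω) ^ 2)) := by
  have hXint : Integrable X := by
    have hbint : Integrable (fun ω => X ω ^ 2 + 1) := hX2.add (integrable_const 1)
    refine hbint.mono' hX.aestronglyMeasurable ?_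
    filter_upwards with ω
    rw [Real.norm_eq_abs, abs_of_nonneg (hXpos ω)]
    nlinarith [sq_nonneg (X ω - 1), hXpos ω]
  have LP : Tendsto (fun s => ∫ ω, (if X ω ≤ s then (1:ℝ) else 0)) atTop (nhds 1) := by
    have h := aux_tendsto_le hX (fun _ => (1:ℝ)) measurable_const (bnd1 X) hX2 hXint
    simpa using h
  have LA : Tendsto (fun s => ∫ ω, X ω * (if X ω ≤ s then (1:ℝ) else 0)) atTop
      (nhds 1) := by
    have h := aux_tendsto_le hX X hX (bndX X) hX2 hXint
    rwa [hmean] at h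
  have LB : Tendsto (fun s => ∫ ω, X ω ^ 2 * (if X ω ≤ s then (1:ℝ) else 0)) atTop
      (nhds (∫ ω, X ω ^ 2)) :=
    aux_tendsto_le hX (fun ω => X ω ^ 2) (hX.pow_const 2) (bndX2 X) hX2 hXint
  have LT : Tendsto (fun s => ∫ ω, s * (if s < X ω then (1:ℝ) else 0)) atTop
      (nhds 0) := by
    refine aux_tendsto_gt hX hX2 hXint (fun s _ => s) (fun s => measurable_const) ?_
    intro s ω h0 hlt
    show |s| ≤ |X ω| ^ 2 + |X ω| + 1
    rw [abs_of_nonneg h0]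
    nlinarith [le_abs_self (X ω), abs_nonneg (X ω), sq_nonneg (|X ω|)]
  have LU : Tendsto (fun s => ∫ ω, s ^ 2 * (if s < X ω then (1:ℝ) else 0)) atTop
      (nhds 0) := by
    refine aux_tendsto_gt hX hX2 hXint (fun s _ => s ^ 2) (fun s => measurable_const) ?_
    intro s ω h0 hlt
    show |s ^ 2| ≤ |X ω| ^ 2 + |X ω| + 1
    rw [abs_of_nonneg (by positivity)]
    nlinarith [le_abs_self (X ω), abs_nonneg (X ω)]
  have LG : Tendsto (fun s => ∫ ω, s * (X ω - 1) * (if s < X ω then (1:ℝ) else 0)) atTop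
      (nhds 0) := by
    refine aux_tendsto_gt hX hX2 hXint (fun s ω => s * (X ω - 1))
      (fun s => measurable_const.mul (hX.sub measurable_const)) ?_
    intro s ω h0 hlt
    have habs : |X ω - 1| ≤ |X ω| + 1 := by
      calc |X ω - 1| = |X ω + (-1)| := by ring_nf
        _ ≤ |X ω| + |(-1:ℝ)| := abs_add_le _ _
        _ = |X ω| + 1 := by simp
    show |s * (X ω - 1)| ≤ |X ω| ^ 2 + |X ω| + 1
    rw [abs_mul, abs_of_nonneg h0]
    have hsX : s ≤ |X ω| := le_trans hlt.le (le_abs_self _)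
    nlinarith [abs_nonneg (X ω), abs_nonneg (X ω - 1)]
  have Lψ := aux_tendsto_psi hX hXpos
  have hψpos : ∀ᶠ s in atTop, 0 < ∫ ω, if X ω ≤ s then 1 - X ω / s else 0 :=
    Lψ.eventually (eventually_gt_nhds zero_lt_one)
  simp only [hY, hψ]
  constructor
  · have target1 : Tendsto (fun s =>
        (∫ ω, if X ω ≤ s then 1 - X ω / s else 0)⁻¹ *
        (-(∫ ω, s * (X ω - 1) * (if s < X ω then (1:ℝ) else 0))
          + (∫ ω, X ω * (if X ω ≤ s then (1:ℝ) else 0))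
          - ∫ ω, X ω ^ 2 * (if X ω ≤ s then (1:ℝ) else 0))) atTop
        (nhds (-((∫ ω, X ω ^ 2) - (∫ ω, X ω) ^ 2))) := by
      have hpt : -((∫ ω, X ω ^ 2) - (∫ ω, X ω) ^ 2)
          = (1:ℝ)⁻¹ * (-0 + 1 - ∫ ω, X ω ^ 2) := by rw [hmean]; ring
      rw [hpt]
      exact (Lψ.inv₀ one_ne_zero).mul ((LG.neg.add LA).sub LB)
    apply target1.congr'
    filter_upwards [hψpos, eventually_ge_atTop (1:ℝ)] with s hψs hs1
    have hs0 : s ≠ 0 := by positivity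
    have hψ0 : (∫ ω, if X ω ≤ s then 1 - X ω / s else 0) ≠ 0 := ne_of_gt hψs
    have e2 : (∫ ω, X ω * ((1 / ∫ ω, if X ω ≤ s then 1 - X ω / s else 0) *
        (if X ω ≤ s then 1 - X ω / s else 0))) =
        (1 / ∫ ω, if X ω ≤ s then 1 - X ω / s else 0) *
          ∫ ω, X ω * (if X ω ≤ s then 1 - X ω / s else 0) := by
      rw [← integral_const_mul]
      congr 1; funext ω; ring
    have e3 : (∫ ω, (1 / ∫ ω, if X ω ≤ s then 1 - X ω / s else 0) *
        (if X ω ≤ s then 1 - X ω / s else 0)) =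
        (1 / ∫ ω, if X ω ≤ s then 1 - X ω / s else 0) *
          ∫ ω, (if X ω ≤ s then 1 - X ω / s else 0) := integral_const_mul _ _
    have h1' : s * (∫ ω, if X ω ≤ s then 1 - X ω / s else 0) =
        s * (∫ ω, if X ω ≤ s then (1:ℝ) else 0)
          - ∫ ω, X ω * (if X ω ≤ s then (1:ℝ) else 0) := by
      rw [idPsi hX hX2 hXint s, mul_sub, ← mul_assoc, mul_inv_cancel₀ hs0, one_mul]
    have h4' := idG hX hX2 hXint hmean s
    rw [e2, e3, idXv hX hX2 hXint s, hmean]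
    exact (alg1 s _ _ _ _ _ hs0 hψ0 h1' h4').symm
  · have target2 : Tendsto (fun s =>
        ((∫ ω, if X ω ≤ s then 1 - X ω / s else 0)⁻¹) ^ 2 *
        ((∫ ω, (if X ω ≤ s then (1:ℝ) else 0)) *
            (∫ ω, s ^ 2 * (if s < X ω then (1:ℝ) else 0))
          - 2 * ((∫ ω, X ω * (if X ω ≤ s then (1:ℝ) else 0)) *
            (∫ ω, s * (if s < X ω then (1:ℝ) else 0)))
          + (∫ ω, X ω ^ 2 * (if X ω ≤ s then (1:ℝ) else 0))
          - (∫ ω, X ω * (if X ω ≤ s then (1:ℝ) else 0)) ^ 2)) atTop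
        (nhds ((∫ ω, X ω ^ 2) - (∫ ω, X ω) ^ 2)) := by
      have hpt : (∫ ω, X ω ^ 2) - (∫ ω, X ω) ^ 2
          = ((1:ℝ)⁻¹) ^ 2 * (1 * 0 - 2 * (1 * 0) + (∫ ω, X ω ^ 2) - 1 ^ 2) := by
        rw [hmean]; ring
      rw [hpt]
      exact ((Lψ.inv₀ one_ne_zero).pow 2).mul
        ((((LP.mul LU).sub ((LA.mul LT).const_mul 2)).add LB).sub (LA.pow 2))
    apply target2.congr'
    filter_upwards [hψpos, eventually_ge_atTop (1:ℝ)] with s hψs hs1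
    have hs0 : s ≠ 0 := by positivity
    have hψ0 : (∫ ω, if X ω ≤ s then 1 - X ω / s else 0) ≠ 0 := ne_of_gt hψs
    have e4 : (∫ ω, ((1 / ∫ ω, if X ω ≤ s then 1 - X ω / s else 0) *
        (if X ω ≤ s then 1 - X ω / s else 0)) ^ 2) =
        (1 / ∫ ω, if X ω ≤ s then 1 - X ω / s else 0) ^ 2 *
          ∫ ω, (if X ω ≤ s then 1 - X ω / s else 0) ^ 2 := by
      rw [← integral_const_mul]
      congr 1; funext ω; ring
    have e3 : (∫ ω, (1 / ∫ ω, if X ω ≤ s then 1 - X ω / s else 0) *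
        (if X ω ≤ s then 1 - X ω / s else 0)) =
        (1 / ∫ ω, if X ω ≤ s then 1 - X ω / s else 0) *
          ∫ ω, (if X ω ≤ s then 1 - X ω / s else 0) := integral_const_mul _ _
    have h1' : s * (∫ ω, if X ω ≤ s then 1 - X ω / s else 0) =
        s * (∫ ω, if X ω ≤ s then (1:ℝ) else 0)
          - ∫ ω, X ω * (if X ω ≤ s then (1:ℝ) else 0) := by
      rw [idPsi hX hX2 hXint s, mul_sub, ← mul_assoc, mul_inv_cancel₀ hs0, one_mul]
    rw [e4, e3, idQv hX hX2 hXint s, idT hX hX2 hXint s, idU hX hX2 hXint s]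
    exact (alg2 s _ _ _ _ hs0 hψ0 h1').symm
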